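/- The insertion map o_i : A^{pb}_n ⊗ A^{pb}_m → A^{pb}_{n+m-1} defined on generators by o_i(t_{pq} ⊗ 1) = t_{φ(p)φ(q)} for p, q ≠ i, o_i(t_{iq} ⊗ 1) = Σ_{r=i}^{i+m-1} t_{r φ(q)}, and o_i(1 ⊗ t_{pq}) = t_{i+p-1, i+q-1}, where φ(k) = k for k ≤ i and φ(k) = k+m−1 for k > i, is a well-defined algebra homomorphism, i.e. it preserves the defining relations [t_{ij} + t_{ik}, t_{jk}] = 0 and [t_{ij}, t_{kl}] = 0. -/

import Mathlib

noncomputable section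
open FreeLieAlgebra

def DKrels (n : ℕ) : Set (FreeLieAlgebra ℚ (Fin n × Fin n)) :=
  {x | (∃ i, x = of ℚ (i, i)) ∨
       (∃ i j, x = of ℚ (i, j) - of ℚ (j, i)) ∨
       (∃ i j k, i ≠ j ∧ i ≠ k ∧ j ≠ k ∧
          x = ⁅of ℚ (i, j) + of ℚ (i, k), of ℚ (j, k)⁆) ∨
       (∃ i j k l, ({i, j} ∩ {k, l} : Set (Fin n)) = ∅ ∧ i ≠ j ∧ k ≠ l ∧
          x = ⁅of ℚ (i, j), of ℚ (k, l)⁆)}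

def DKideal (n : ℕ) : LieIdeal ℚ (FreeLieAlgebra ℚ (Fin n × Fin n)) :=
  LieSubmodule.lieSpan ℚ _ (DKrels n)

/-- The Drinfeld–Kohno Lie algebra on `n` strands over `ℚ`. -/
def DK (n : ℕ) : Type := FreeLieAlgebra ℚ (Fin n × Fin n) ⧸ DKideal n

instance (n : ℕ) : LieRing (DK n) := by unfold DK; infer_instance
instance (n : ℕ) : LieAlgebra ℚ (DK n) := by unfold DK; infer_instance

/-- The generator `t_{ij}` of the Drinfeld–Kohno Lie algebra. -/
def tDK {n : ℕ} (i j : Fin n) : DK n :=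
  LieSubmodule.Quotient.mk' (DKideal n) (of ℚ (i, j))

open scoped TensorProduct

/-- The generator `t_{ij}` inside the universal enveloping algebra `U𝔤ₙ`
(whose completion is `A^{pb}ₙ`). -/
def tU {n : ℕ} (i j : Fin n) : UniversalEnvelopingAlgebra ℚ (DK n) :=
  UniversalEnvelopingAlgebra.ι ℚ (tDK i j)

namespace DKaux

attribute [local instance] LieRing.ofAssociativeRing

/-! ### Basic facts about the generators of `DK` -/

lemma mk_rel_zero {n : ℕ} {x : FreeLieAlgebra ℚ (Fin n × Fin n)} (h : x ∈ DKrels n) :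
    LieSubmodule.Quotient.mk' (DKideal n) x = 0 :=
  (LieSubmodule.Quotient.mk_eq_zero _).mpr (LieSubmodule.subset_lieSpan h)

lemma mk'_sub {n : ℕ} (x y : FreeLieAlgebra ℚ (Fin n × Fin n)) :
    LieSubmodule.Quotient.mk' (DKideal n) (x - y) =
      LieSubmodule.Quotient.mk' (DKideal n) x - LieSubmodule.Quotient.mk' (DKideal n) y :=
  LinearMap.map_sub _ x y

lemma mk'_add {n : ℕ} (x y : FreeLieAlgebra ℚ (Fin n × Fin n)) :
    LieSubmodule.Quotient.mk' (DKideal n) (x + y) =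
      LieSubmodule.Quotient.mk' (DKideal n) x + LieSubmodule.Quotient.mk' (DKideal n) y :=
  LinearMap.map_add _ x y

lemma mk'_bracket {n : ℕ} (x y : FreeLieAlgebra ℚ (Fin n × Fin n)) :
    LieSubmodule.Quotient.mk' (DKideal n) ⁅x, y⁆ =
      ⁅LieSubmodule.Quotient.mk' (DKideal n) x, LieSubmodule.Quotient.mk' (DKideal n) y⁆ :=
  rfl

lemma tDK_self {n : ℕ} (a : Fin n) : tDK a a = 0 :=
  mk_rel_zero (Or.inl ⟨a, rfl⟩)

lemma tDK_symm {n : ℕ} (a b : Fin n) : tDK a b = tDK b a := by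
  have := mk_rel_zero (n := n) (Or.inr (Or.inl ⟨a, b, rfl⟩))
  rw [mk'_sub] at this
  exact sub_eq_zero.mp this

lemma tDK_lie3 {n : ℕ} {a b c : Fin n} (hab : a ≠ b) (hac : a ≠ c) (hbc : b ≠ c) :
    ⁅tDK a b + tDK a c, tDK b c⁆ = 0 := by
  have := mk_rel_zero (n := n) (Or.inr (Or.inr (Or.inl ⟨a, b, c, hab, hac, hbc, rfl⟩)))
  rwa [mk'_bracket, mk'_add] at this

lemma tDK_lie4 {n : ℕ} {a b c d : Fin n} (hab : a ≠ b) (hcd : c ≠ d)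
    (hac : a ≠ c) (had : a ≠ d) (hbc : b ≠ c) (hbd : b ≠ d) :
    ⁅tDK a b, tDK c d⁆ = 0 := by
  have hset : ({a, b} ∩ {c, d} : Set (Fin n)) = ∅ := by
    ext x
    simp only [Set.mem_inter_iff, Set.mem_insert_iff, Set.mem_singleton_iff,
      Set.mem_empty_iff_false, iff_false, not_and]
    rintro (rfl | rfl) <;> rintro (rfl | rfl) <;> simp_all
  have := mk_rel_zero (n := n) (Or.inr (Or.inr (Or.inr ⟨a, b, c, d, hset, hab, hcd, rfl⟩)))
  rwa [mk'_bracket] at this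

lemma inter_pairwise {α : Type*} {a b c d : α} (h : ({a, b} ∩ {c, d} : Set α) = ∅) :
    a ≠ c ∧ a ≠ d ∧ b ≠ c ∧ b ≠ d := by
  rw [Set.eq_empty_iff_forall_notMem] at h
  refine ⟨?_, ?_, ?_, ?_⟩ <;> rintro rfl
  · exact h a (by simp)
  · exact h a (by simp)
  · exact h b (by simp)
  · exact h b (by simp)

lemma sum_lie' {ι L : Type*} [LieRing L] (s : Finset ι) (f : ι → L) (z : L) :
    ⁅∑ r ∈ s, f r, z⁆ = ∑ r ∈ s, ⁅f r, z⁆ := by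
  induction s using Finset.cons_induction with
  | empty => simp
  | cons a s ha ih => simp [Finset.sum_cons, add_lie, ih]

lemma lie_sum' {ι L : Type*} [LieRing L] (s : Finset ι) (f : ι → L) (z : L) :
    ⁅z, ∑ r ∈ s, f r⁆ = ∑ r ∈ s, ⁅z, f r⁆ := by
  induction s using Finset.cons_induction with
  | empty => simp
  | cons a s ha ih => simp [Finset.sum_cons, lie_add, ih]

/-! ### Generation and lifting lemmas -/

lemma freeLie_mem {X : Type*} (K : LieSubalgebra ℚ (FreeLieAlgebra ℚ X))
    (h : ∀ v, of ℚ v ∈ K) (x : FreeLieAlgebra ℚ X) : x ∈ K := by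
  let j : FreeLieAlgebra ℚ X →ₗ⁅ℚ⁆ K := FreeLieAlgebra.lift ℚ (fun v => ⟨of ℚ v, h v⟩)
  have hj : K.incl.comp j = LieHom.id := by
    apply FreeLieAlgebra.hom_ext
    intro v
    simp [j, lift_of_apply]
  have : K.incl (j x) = x := by
    exact congrArg (fun F : _ →ₗ⁅ℚ⁆ _ => F x) hj
  rw [← this]
  exact (j x).2

open UniversalEnvelopingAlgebra in
lemma uea_commute {L A : Type*} [LieRing L] [LieAlgebra ℚ L] [Ring A] [Algebra ℚ A]
    (F : UniversalEnvelopingAlgebra ℚ L →ₐ[ℚ] A) (z : A)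
    (h : ∀ l, Commute (F (ι ℚ l)) z) (x : UniversalEnvelopingAlgebra ℚ L) :
    Commute (F x) z := by
  let C := Subalgebra.centralizer ℚ ({z} : Set A)
  let g : L →ₗ⁅ℚ⁆ C :=
    { toFun := fun l => ⟨F (ι ℚ l), by
        rw [Subalgebra.mem_centralizer_iff]
        rintro g ⟨rfl⟩
        exact (h l).symm⟩
      map_add' := fun a b => by ext; simp
      map_smul' := fun t a => by ext; simp
      map_lie' := fun {a b} => by
        ext
        simp only [LieHom.map_lie]
        rw [LieRing.of_associative_ring_bracket, LieRing.of_associative_ring_bracket]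
        push_cast
        simp [map_sub, map_mul] }
  let G : UniversalEnvelopingAlgebra ℚ L →ₐ[ℚ] C := UniversalEnvelopingAlgebra.lift ℚ g
  have hFG : C.val.comp G = F := by
    apply UniversalEnvelopingAlgebra.hom_ext
    apply LieHom.ext
    intro l
    simp [G, UniversalEnvelopingAlgebra.lift_ι_apply, g]
  have : F x ∈ C := by
    rw [← hFG]
    exact (G x).2
  rw [Subalgebra.mem_centralizer_iff] at this
  exact (this z rfl).symm

open UniversalEnvelopingAlgebra in
lemma commute_of_lie {L : Type*} [LieRing L] [LieAlgebra ℚ L] {a b : L} (h : ⁅a, b⁆ = 0) :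
    Commute (ι ℚ a) (ι ℚ b) := by
  have h2 : ι ℚ ⁅a, b⁆ = ⁅ι ℚ a, ι ℚ b⁆ := LieHom.map_lie _ _ _
  rw [h, map_zero, LieRing.of_associative_ring_bracket] at h2
  exact (sub_eq_zero.mp h2.symm)

variable {n : ℕ} {M : Type*} [LieRing M] [LieAlgebra ℚ M]

def DKlift (F : FreeLieAlgebra ℚ (Fin n × Fin n) →ₗ⁅ℚ⁆ M)
    (h : ∀ x ∈ DKrels n, F x = 0) : DK n →ₗ⁅ℚ⁆ M where
  toLinearMap := Submodule.liftQ (DKideal n).toSubmodule (F : _ →ₗ[ℚ] M)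
    (by
      intro x hx
      have hx' : x ∈ DKideal n := hx
      have hle : DKideal n ≤ F.ker := LieSubmodule.lieSpan_le.mpr
        (fun y hy => LieHom.mem_ker.mpr (h y hy))
      simpa using (LieHom.mem_ker).mp (hle hx'))
  map_lie' := by
    intro x y
    obtain ⟨a, rfl⟩ := LieSubmodule.Quotient.surjective_mk' (DKideal n) x
    obtain ⟨b, rfl⟩ := LieSubmodule.Quotient.surjective_mk' (DKideal n) y
    show F ⁅a, b⁆ = ⁅F a, F b⁆
    exact F.map_lie a b

lemma DKlift_mk' (F : FreeLieAlgebra ℚ (Fin n × Fin n) →ₗ⁅ℚ⁆ M)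
    (h : ∀ x ∈ DKrels n, F x = 0) (x : FreeLieAlgebra ℚ (Fin n × Fin n)) :
    DKlift F h (LieSubmodule.Quotient.mk' (DKideal n) x) = F x := rfl

lemma DKlift_tDK (F : FreeLieAlgebra ℚ (Fin n × Fin n) →ₗ⁅ℚ⁆ M)
    (h : ∀ x ∈ DKrels n, F x = 0) (a b : Fin n) :
    DKlift F h (tDK a b) = F (of ℚ (a, b)) := rfl




section Insertion

variable (n m : ℕ) (i : Fin (n + 1))

/-- The index shift avoiding the block. -/
def φm : Fin (n + 1) → Fin (n + m + 1) := fun k =>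
  if (k : ℕ) ≤ (i : ℕ) then ⟨k, Nat.lt_succ_of_le (by omega)⟩
  else ⟨(k : ℕ) + m, Nat.lt_succ_of_le (by omega)⟩

/-- The inserted block of indices. -/
def blk : Fin (m + 1) → Fin (n + m + 1) := fun r =>
  ⟨(i : ℕ) + (r : ℕ), Nat.lt_succ_of_le (by omega)⟩

/-- The images of the generators of the left factor. -/
def gmap : Fin (n + 1) × Fin (n + 1) → DK (n + m + 1) := fun pq =>
  if pq.1 = i then
    (if pq.2 = i then 0 else ∑ r : Fin (m + 1), tDK (blk n m i r) (φm n m i pq.2))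
  else if pq.2 = i then ∑ r : Fin (m + 1), tDK (blk n m i r) (φm n m i pq.1)
  else tDK (φm n m i pq.1) (φm n m i pq.2)

/-- The images of the generators of the right factor. -/
def hmap : Fin (m + 1) × Fin (m + 1) → DK (n + m + 1) := fun pq =>
  tDK (blk n m i pq.1) (blk n m i pq.2)

variable {n m i}

lemma blk_inj {r s : Fin (m + 1)} (h : r ≠ s) : blk n m i r ≠ blk n m i s := by
  have : (r : ℕ) ≠ (s : ℕ) := fun hh => h (Fin.ext hh)
  simp only [blk, ne_eq, Fin.mk.injEq]
  omega

lemma φm_ne_blk {q : Fin (n + 1)} (hq : q ≠ i) (r : Fin (m + 1)) :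
    φm n m i q ≠ blk n m i r := by
  have hq' : (q : ℕ) ≠ (i : ℕ) := fun hh => hq (Fin.ext hh)
  have hr : (r : ℕ) < m + 1 := r.isLt
  simp only [φm, blk, ne_eq]
  split_ifs with h <;> simp only [Fin.mk.injEq] <;> omega

lemma φm_inj {p q : Fin (n + 1)} (hpq : p ≠ q) : φm n m i p ≠ φm n m i q := by
  have : (p : ℕ) ≠ (q : ℕ) := fun hh => hpq (Fin.ext hh)
  simp only [φm, ne_eq]
  split_ifs with h1 h2 h2 <;> simp only [Fin.mk.injEq] <;> omega

lemma sum_block_lie {Q : Fin (n + m + 1)} (hQ : ∀ r, Q ≠ blk n m i r)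
    {a b : Fin (m + 1)} (hab : a ≠ b) :
    ⁅∑ r : Fin (m + 1), tDK (blk n m i r) Q, tDK (blk n m i a) (blk n m i b)⁆ = 0 := by
  rw [sum_lie']
  rw [← Finset.sum_subset (Finset.subset_univ ({a, b} : Finset (Fin (m + 1))))
    (fun r _ hr => ?_)]
  · rw [Finset.sum_pair hab, ← add_lie,
      tDK_symm (blk n m i a) Q, tDK_symm (blk n m i b) Q]
    exact tDK_lie3 (hQ a) (hQ b) (blk_inj hab)
  · simp only [Finset.mem_insert, Finset.mem_singleton, not_or] at hr
    exact tDK_lie4 (fun h => hQ r h.symm) (blk_inj hab) (blk_inj hr.1) (blk_inj hr.2)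
      (hQ a) (hQ b)

lemma K4 {A B : Fin (n + m + 1)} (hA : ∀ r, A ≠ blk n m i r) (hB : ∀ r, B ≠ blk n m i r)
    (hAB : A ≠ B) :
    ⁅(∑ r : Fin (m + 1), tDK (blk n m i r) A) + tDK A B,
      ∑ s : Fin (m + 1), tDK (blk n m i s) B⁆ = 0 := by
  rw [lie_sum']
  apply Finset.sum_eq_zero
  intro s _
  rw [add_lie, sum_lie', Finset.sum_eq_single s
    (fun r _ hr => tDK_lie4 (fun h => hA r h.symm) (fun h => hB s h.symm)
      (blk_inj hr) (fun h => hB r h.symm) (hA s) hAB)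
    (fun h => absurd (Finset.mem_univ s) h)]
  rw [← add_lie, tDK_symm (blk n m i s) A]
  exact tDK_lie3 (hA s) hAB (fun h => hB s h.symm)




lemma gmap_ii : gmap n m i (i, i) = 0 := by simp [gmap]

lemma gmap_iq {q : Fin (n + 1)} (hq : q ≠ i) :
    gmap n m i (i, q) = ∑ r : Fin (m + 1), tDK (blk n m i r) (φm n m i q) := by
  simp [gmap, hq]

lemma gmap_qi {p : Fin (n + 1)} (hp : p ≠ i) :
    gmap n m i (p, i) = ∑ r : Fin (m + 1), tDK (blk n m i r) (φm n m i p) := by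
  simp [gmap, hp]

lemma gmap_pq {p q : Fin (n + 1)} (hp : p ≠ i) (hq : q ≠ i) :
    gmap n m i (p, q) = tDK (φm n m i p) (φm n m i q) := by
  simp [gmap, hp, hq]

lemma hrelβ : ∀ x ∈ DKrels (m + 1),
    (FreeLieAlgebra.lift ℚ (hmap n m i)) x = 0 := by
  intro x hx
  rcases hx with ⟨a, rfl⟩ | ⟨a, b, rfl⟩ | ⟨a, b, c, hab, hac, hbc, rfl⟩ |
    ⟨a, b, c, d, hset, hab, hcd, rfl⟩
  · rw [lift_of_apply]
    exact tDK_self _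
  · rw [map_sub, lift_of_apply, lift_of_apply]
    exact sub_eq_zero.mpr (tDK_symm _ _)
  · rw [LieHom.map_lie, map_add, lift_of_apply, lift_of_apply, lift_of_apply]
    exact tDK_lie3 (blk_inj hab) (blk_inj hac) (blk_inj hbc)
  · obtain ⟨hac, had, hbc, hbd⟩ := inter_pairwise hset
    rw [LieHom.map_lie, lift_of_apply, lift_of_apply]
    exact tDK_lie4 (blk_inj hab) (blk_inj hcd) (blk_inj hac) (blk_inj had)
      (blk_inj hbc) (blk_inj hbd)

lemma gmap_comm (a b : Fin (n + 1)) : gmap n m i (a, b) = gmap n m i (b, a) := by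
  by_cases ha : a = i
  · subst ha
    by_cases hb : b = a
    · subst hb; rfl
    · rw [gmap_iq hb, gmap_qi hb]
  · by_cases hb : b = i
    · subst hb
      rw [gmap_iq ha, gmap_qi ha]
    · rw [gmap_pq ha hb, gmap_pq hb ha, tDK_symm]

lemma hrelα : ∀ x ∈ DKrels (n + 1),
    (FreeLieAlgebra.lift ℚ (gmap n m i)) x = 0 := by
  intro x hx
  rcases hx with ⟨a, rfl⟩ | ⟨a, b, rfl⟩ | ⟨a, b, c, hab, hac, hbc, rfl⟩ |
    ⟨a, b, c, d, hset, hab, hcd, rfl⟩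
  · rw [lift_of_apply]
    by_cases ha : a = i
    · rw [ha, gmap_ii]
    · rw [gmap_pq ha ha, tDK_self]
  · rw [map_sub, lift_of_apply, lift_of_apply, sub_eq_zero]
    exact gmap_comm a b
  · rw [LieHom.map_lie, map_add, lift_of_apply, lift_of_apply, lift_of_apply]
    by_cases ha : a = i
    · have hb : b ≠ i := fun h => hab (ha.trans h.symm)
      have hc : c ≠ i := fun h => hac (ha.trans h.symm)
      rw [ha, gmap_iq hb, gmap_iq hc, gmap_pq hb hc]
      rw [← Finset.sum_add_distrib, sum_lie']
      apply Finset.sum_eq_zero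
      intro r _
      exact tDK_lie3 (fun h => φm_ne_blk hb r h.symm) (fun h => φm_ne_blk hc r h.symm)
        (φm_inj hbc)
    · by_cases hb : b = i
      · have hc : c ≠ i := fun h => hbc (hb.trans h.symm)
        rw [hb, gmap_qi ha, gmap_pq ha hc, gmap_iq hc]
        exact K4 (φm_ne_blk ha) (φm_ne_blk hc) (φm_inj hac)
      · by_cases hc : c = i
        · rw [hc, gmap_pq ha hb, gmap_qi ha, gmap_qi hb,
            add_comm (tDK (φm n m i a) (φm n m i b))]
          exact K4 (φm_ne_blk ha) (φm_ne_blk hb) (φm_inj hab)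
        · rw [gmap_pq ha hb, gmap_pq ha hc, gmap_pq hb hc]
          exact tDK_lie3 (φm_inj hab) (φm_inj hac) (φm_inj hbc)
  · obtain ⟨hac, had, hbc, hbd⟩ := inter_pairwise hset
    rw [LieHom.map_lie, lift_of_apply, lift_of_apply]
    by_cases ha : a = i
    · have hb : b ≠ i := fun h => hab (ha.trans h.symm)
      have hc : c ≠ i := fun h => hac (ha.trans h.symm)
      have hd : d ≠ i := fun h => had (ha.trans h.symm)
      rw [ha, gmap_iq hb, gmap_pq hc hd, sum_lie']
      apply Finset.sum_eq_zero
      intro r _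
      exact tDK_lie4 (fun h => φm_ne_blk hb r h.symm) (φm_inj hcd)
        (fun h => φm_ne_blk hc r h.symm) (fun h => φm_ne_blk hd r h.symm)
        (φm_inj hbc) (φm_inj hbd)
    · by_cases hb : b = i
      · have hc : c ≠ i := fun h => hbc (hb.trans h.symm)
        have hd : d ≠ i := fun h => hbd (hb.trans h.symm)
        rw [hb, gmap_qi ha, gmap_pq hc hd, sum_lie']
        apply Finset.sum_eq_zero
        intro r _
        exact tDK_lie4 (fun h => φm_ne_blk ha r h.symm) (φm_inj hcd)
          (fun h => φm_ne_blk hc r h.symm) (fun h => φm_ne_blk hd r h.symm)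
          (φm_inj hac) (φm_inj had)
      · by_cases hc : c = i
        · have hd : d ≠ i := fun h => hcd (hc.trans h.symm)
          rw [hc, gmap_pq ha hb, gmap_iq hd, lie_sum']
          apply Finset.sum_eq_zero
          intro r _
          exact tDK_lie4 (φm_inj hab) (fun h => φm_ne_blk hd r h.symm)
            (φm_ne_blk ha r) (φm_inj had) (φm_ne_blk hb r) (φm_inj hbd)
        · by_cases hd : d = i
          · rw [hd, gmap_pq ha hb, gmap_qi hc, lie_sum']
            apply Finset.sum_eq_zero
            intro r _
            exact tDK_lie4 (φm_inj hab) (fun h => φm_ne_blk hc r h.symm)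
              (φm_ne_blk ha r) (φm_inj hac) (φm_ne_blk hb r) (φm_inj hbc)
          · rw [gmap_pq ha hb, gmap_pq hc hd]
            exact tDK_lie4 (φm_inj hab) (φm_inj hcd) (φm_inj hac) (φm_inj had)
              (φm_inj hbc) (φm_inj hbd)



variable (n m i)

/-- The left Lie algebra morphism. -/
def αmap : DK (n + 1) →ₗ⁅ℚ⁆ DK (n + m + 1) :=
  DKlift (FreeLieAlgebra.lift ℚ (gmap n m i)) hrelα

/-- The right Lie algebra morphism. -/
def βmap : DK (m + 1) →ₗ⁅ℚ⁆ DK (n + m + 1) :=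
  DKlift (FreeLieAlgebra.lift ℚ (hmap n m i)) hrelβ

lemma αmap_tDK (a b : Fin (n + 1)) : αmap n m i (tDK a b) = gmap n m i (a, b) := by
  rw [αmap, DKlift_tDK, lift_of_apply]

lemma βmap_tDK (a b : Fin (m + 1)) : βmap n m i (tDK a b) = hmap n m i (a, b) := by
  rw [βmap, DKlift_tDK, lift_of_apply]

variable {n m i}

lemma gmap_lie_hmap (v : Fin (n + 1) × Fin (n + 1)) (w : Fin (m + 1) × Fin (m + 1)) :
    ⁅gmap n m i v, hmap n m i w⁆ = 0 := by
  obtain ⟨p, q⟩ := v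
  obtain ⟨a, b⟩ := w
  by_cases hw : a = b
  · rw [hmap]
    show ⁅_, tDK (blk n m i a) (blk n m i b)⁆ = 0
    rw [hw, tDK_self, lie_zero]
  · by_cases hp : p = i
    · by_cases hq : q = i
      · rw [hp, hq, gmap_ii, zero_lie]
      · rw [hp, gmap_iq hq]
        exact sum_block_lie (φm_ne_blk hq) hw
    · by_cases hq : q = i
      · rw [hq, gmap_qi hp]
        exact sum_block_lie (φm_ne_blk hp) hw
      · by_cases hpq : p = q
        · rw [gmap_pq hp hq, hpq, tDK_self, zero_lie]
        · rw [gmap_pq hp hq]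
          exact tDK_lie4 (φm_inj hpq) (blk_inj hw) (φm_ne_blk hp a) (φm_ne_blk hp b)
            (φm_ne_blk hq a) (φm_ne_blk hq b)

lemma αmap_lie_βmap (x : DK (n + 1)) (y : DK (m + 1)) :
    ⁅αmap n m i x, βmap n m i y⁆ = 0 := by
  obtain ⟨x, rfl⟩ := LieSubmodule.Quotient.surjective_mk' (DKideal (n + 1)) x
  obtain ⟨y, rfl⟩ := LieSubmodule.Quotient.surjective_mk' (DKideal (m + 1)) y
  show ⁅(FreeLieAlgebra.lift ℚ (gmap n m i)) x, (FreeLieAlgebra.lift ℚ (hmap n m i)) y⁆ = 0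
  set Fα := FreeLieAlgebra.lift ℚ (gmap n m i)
  set Fβ := FreeLieAlgebra.lift ℚ (hmap n m i)
  let K1 : LieSubalgebra ℚ (FreeLieAlgebra ℚ (Fin (n + 1) × Fin (n + 1))) :=
    { carrier := {x | ∀ y, ⁅Fα x, Fβ y⁆ = 0}
      add_mem' := fun {u v} hu hv y => by
        rw [map_add, add_lie, hu y, hv y, add_zero]
      zero_mem' := fun y => by
        rw [map_zero, zero_lie]
      smul_mem' := fun t u hu y => by
        rw [map_smul, smul_lie, hu y, smul_zero]
      lie_mem' := fun {u v} hu hv y => by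
        rw [LieHom.map_lie, lie_lie, hu, hv, lie_zero, lie_zero, sub_zero] }
  have hgen : ∀ v, of ℚ v ∈ K1 := by
    intro v
    intro y
    revert y
    have hc : ∀ w, ⁅Fα (of ℚ v), Fβ (of ℚ w)⁆ = 0 := by
      intro w
      rw [lift_of_apply, lift_of_apply]
      exact gmap_lie_hmap v w
    let K2 : LieSubalgebra ℚ (FreeLieAlgebra ℚ (Fin (m + 1) × Fin (m + 1))) :=
      { carrier := {y | ⁅Fα (of ℚ v), Fβ y⁆ = 0}
        add_mem' := fun {u w} hu hw => by
          rw [Set.mem_setOf_eq] at hu hw ⊢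
          rw [map_add, lie_add, hu, hw, add_zero]
        zero_mem' := by
          rw [Set.mem_setOf_eq, map_zero, lie_zero]
        smul_mem' := fun t u hu => by
          rw [Set.mem_setOf_eq] at hu ⊢
          rw [map_smul, lie_smul, hu, smul_zero]
        lie_mem' := fun {u w} hu hw => by
          rw [Set.mem_setOf_eq] at hu hw ⊢
          rw [LieHom.map_lie, leibniz_lie, hu, hw, lie_zero, zero_lie, add_zero] }
    exact fun y => freeLie_mem K2 (fun w => hc w) y
  exact freeLie_mem K1 hgen x y

end Insertion

lemma ι_sum {L : Type*} [LieRing L] [LieAlgebra ℚ L] {κ : Type*} (s : Finset κ) (f : κ → L) :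
    UniversalEnvelopingAlgebra.ι ℚ (∑ r ∈ s, f r) =
      ∑ r ∈ s, UniversalEnvelopingAlgebra.ι ℚ (f r) := by
  induction s using Finset.cons_induction with
  | empty => simp
  | cons a s ha ih => rw [Finset.sum_cons, Finset.sum_cons, map_add, ih]

end DKaux

open UniversalEnvelopingAlgebra in
/-- the operadic insertion at the `i`-th position is a
well-defined algebra homomorphism
`o_i : A^{pb}_{n+1} ⊗ A^{pb}_{m+1} → A^{pb}_{n+m+1}` determined on the
generators by the displayed formulas (it suffices to treat the universal
enveloping algebras `U𝔤` of the Drinfeld–Kohno Lie algebras): with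
`φ(k) = k` for `k ≤ i` and `φ(k) = k + m` for `k > i`, there exists an
algebra homomorphism `f` with
`f(t_{pq} ⊗ 1) = t_{φ(p)φ(q)}` for `p, q ≠ i`,
`f(t_{iq} ⊗ 1) = Σ_{r=i}^{i+m} t_{r,φ(q)}` for `q ≠ i`, and
`f(1 ⊗ t_{pq}) = t_{i+p, i+q}`. -/
theorem insertion_well_defined (n m : ℕ) (i : Fin (n + 1)) :
    letI φ : Fin (n + 1) → Fin (n + m + 1) := fun k =>
      if (k : ℕ) ≤ (i : ℕ) then ⟨k, by omega⟩ else ⟨(k : ℕ) + m, by omega⟩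
    ∃ f : (UniversalEnvelopingAlgebra ℚ (DK (n + 1)) ⊗[ℚ]
            UniversalEnvelopingAlgebra ℚ (DK (m + 1))) →ₐ[ℚ]
          UniversalEnvelopingAlgebra ℚ (DK (n + m + 1)),
      (∀ p q : Fin (n + 1), p ≠ q → p ≠ i → q ≠ i →
        f (tU p q ⊗ₜ 1) = tU (φ p) (φ q)) ∧
      (∀ q : Fin (n + 1), q ≠ i →
        f (tU i q ⊗ₜ 1) =
          ∑ r : Fin (m + 1), tU ⟨(i : ℕ) + (r : ℕ), by omega⟩ (φ q)) ∧
      (∀ p q : Fin (m + 1),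
        f (1 ⊗ₜ tU p q) =
          tU ⟨(i : ℕ) + (p : ℕ), by omega⟩ ⟨(i : ℕ) + (q : ℕ), by omega⟩) := by
  classical
  letI : LieRing (UniversalEnvelopingAlgebra ℚ (DK (n + m + 1))) := LieRing.ofAssociativeRing
  let A : UniversalEnvelopingAlgebra ℚ (DK (n + 1)) →ₐ[ℚ]
      UniversalEnvelopingAlgebra ℚ (DK (n + m + 1)) :=
    UniversalEnvelopingAlgebra.lift ℚ ((ι ℚ).comp (DKaux.αmap n m i))
  let B : UniversalEnvelopingAlgebra ℚ (DK (m + 1)) →ₐ[ℚ]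
      UniversalEnvelopingAlgebra ℚ (DK (n + m + 1)) :=
    UniversalEnvelopingAlgebra.lift ℚ ((ι ℚ).comp (DKaux.βmap n m i))
  have hA : ∀ x, A (ι ℚ x) = ι ℚ (DKaux.αmap n m i x) := fun x =>
    UniversalEnvelopingAlgebra.lift_ι_apply ℚ _ x
  have hB : ∀ y, B (ι ℚ y) = ι ℚ (DKaux.βmap n m i y) := fun y =>
    UniversalEnvelopingAlgebra.lift_ι_apply ℚ _ y
  have hcomm : ∀ x y, Commute (A x) (B y) := by
    intro x y
    refine DKaux.uea_commute A (B y) (fun l => ?_) x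
    refine (DKaux.uea_commute B (A (ι ℚ l)) (fun l' => ?_) y).symm
    rw [hA, hB]
    exact (DKaux.commute_of_lie (DKaux.αmap_lie_βmap l l')).symm
  refine ⟨Algebra.TensorProduct.lift A B hcomm, ?_, ?_, ?_⟩
  · intro p q hpq hpi hqi
    rw [Algebra.TensorProduct.lift_tmul, map_one, mul_one]
    show A (ι ℚ (tDK p q)) = _
    rw [hA, DKaux.αmap_tDK, DKaux.gmap_pq hpi hqi]
    rfl
  · intro q hqi
    rw [Algebra.TensorProduct.lift_tmul, map_one, mul_one]
    show A (ι ℚ (tDK i q)) = _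
    rw [hA, DKaux.αmap_tDK, DKaux.gmap_iq hqi]
    rw [DKaux.ι_sum]
    rfl
  · intro p q
    rw [Algebra.TensorProduct.lift_tmul, map_one, one_mul]
    show B (ι ℚ (tDK p q)) = _
    rw [hB, DKaux.βmap_tDK]
    rfl
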